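/- (Kook–Reiner–Stanton convolution formula) For any matroid M on ground set E, T_M(x,y) = Σ_{F ∈ L(M)} T_{M|F}(0, y) · T_{M/F}(x, 0), where the sum is over flats F, M|F is the restriction of M to F, and M/F is the contraction of M by F. -/

import Mathlib

/- Kook–Reiner–Stanton convolution formula:
`T_M(x,y) = Σ_{F ∈ L(M)} T_{M|F}(0,y) · T_{M/F}(x,0)`. -/
open Finset

private lemma neg_one_pow_congr_q {a b : ℕ} (h : a % 2 = b % 2) :
    ((-1 : ℚ)) ^ a = (-1) ^ b := by
  rcases Nat.even_or_odd a with ha | ha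
  · have hb : Even b := Nat.even_iff.mpr (by have := Nat.even_iff.mp ha; omega)
    rw [ha.neg_one_pow, hb.neg_one_pow]
  · have hb : Odd b := Nat.odd_iff.mpr (by have := Nat.odd_iff.mp ha; omega)
    rw [ha.neg_one_pow, hb.neg_one_pow]

private lemma sum_powerset_neg_one_q {α : Type*} [DecidableEq α] (s : Finset α) :
    ∑ t ∈ s.powerset, (-1 : ℚ) ^ t.card = if s = ∅ then 1 else 0 := by
  induction s using Finset.induction_on with
  | empty => simp
  | @insert a s ha ih =>
      rw [Finset.sum_powerset_insert ha]
      have key : ∀ t ∈ s.powerset, (-1 : ℚ) ^ (insert a t).card = -(-1 : ℚ) ^ t.card := by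
        intro t ht
        have hat : a ∉ t := fun h => ha (Finset.mem_powerset.mp ht h)
        rw [Finset.card_insert_of_notMem hat, pow_succ]
        ring
      rw [Finset.sum_congr rfl key, Finset.sum_neg_distrib,
        if_neg (Finset.insert_ne_empty a s)]
      ring

private lemma sum_interval_q {n : ℕ} (B D : Finset (Fin n)) :
    ∑ F : Finset (Fin n), (if B ⊆ F ∧ F ⊆ D then (-1 : ℚ) ^ F.card else 0)
      = if D = B then (-1 : ℚ) ^ B.card else 0 := by
  classical
  rw [← Finset.sum_filter]
  by_cases hBD : B ⊆ D
  · have hbij : ∑ F ∈ Finset.univ.filter (fun F => B ⊆ F ∧ F ⊆ D), (-1 : ℚ) ^ F.card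
        = ∑ G ∈ (D \ B).powerset, (-1 : ℚ) ^ (G ∪ B).card := by
      apply Finset.sum_nbij' (fun F => F \ B) (fun G => G ∪ B)
      · intro F hF
        simp only [Finset.mem_filter, Finset.mem_univ, true_and] at hF
        rw [Finset.mem_powerset]
        intro x hx
        simp only [Finset.mem_sdiff] at hx ⊢
        exact ⟨hF.2 hx.1, hx.2⟩
      · intro G hG
        rw [Finset.mem_powerset] at hG
        simp only [Finset.mem_filter, Finset.mem_univ, true_and]
        constructor
        · exact Finset.subset_union_right
        · intro x hx
          rcases Finset.mem_union.mp hx with h | h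
          · exact (Finset.mem_sdiff.mp (hG h)).1
          · exact hBD h
      · intro F hF
        simp only [Finset.mem_filter, Finset.mem_univ, true_and] at hF
        exact Finset.sdiff_union_of_subset hF.1
      · intro G hG
        rw [Finset.mem_powerset] at hG
        apply Finset.union_sdiff_cancel_right
        rw [Finset.disjoint_right]
        intro x hxB hxG
        exact (Finset.mem_sdiff.mp (hG hxG)).2 hxB
      · intro F hF
        simp only [Finset.mem_filter, Finset.mem_univ, true_and] at hF
        rw [Finset.sdiff_union_of_subset hF.1]
    rw [hbij]
    have hcard : ∀ G ∈ (D \ B).powerset, (-1 : ℚ) ^ (G ∪ B).card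
        = (-1 : ℚ) ^ G.card * (-1 : ℚ) ^ B.card := by
      intro G hG
      rw [Finset.mem_powerset] at hG
      have hdisj : Disjoint G B := by
        rw [Finset.disjoint_right]
        intro x hxB hxG
        exact (Finset.mem_sdiff.mp (hG hxG)).2 hxB
      rw [Finset.card_union_of_disjoint hdisj, pow_add]
    rw [Finset.sum_congr rfl hcard, ← Finset.sum_mul, sum_powerset_neg_one_q]
    by_cases hDB : D = B
    · rw [if_pos hDB, if_pos (by rw [hDB]; exact Finset.sdiff_eq_empty_iff_subset.mpr le_rfl),
        one_mul]
    · rw [if_neg hDB, if_neg, zero_mul]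
      intro h
      exact hDB (Finset.Subset.antisymm (Finset.sdiff_eq_empty_iff_subset.mp h) hBD)
  · rw [Finset.sum_eq_zero, if_neg]
    · intro h; exact hBD (h ▸ le_rfl)
    · intro F hF
      simp only [Finset.mem_filter, Finset.mem_univ, true_and] at hF
      exact absurd (hF.1.trans hF.2) hBD
private lemma inner2_eq_zero {n : ℕ} (r : Finset (Fin n) → ℕ) (x : ℚ)
    (mono : ∀ S T : Finset (Fin n), S ⊆ T → r S ≤ r T)
    (addcard : ∀ U S : Finset (Fin n), r (S ∪ U) ≤ r S + U.card)
    (absorb : ∀ (A S : Finset (Fin n)) (e : Fin n),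
      A ⊆ S → r (insert e A) = r A → r (insert e S) = r S)
    (F : Finset (Fin n)) (e : Fin n) (he : e ∉ F) (hre : r (insert e F) = r F) :
    ∑ S ∈ Fᶜ.powerset,
        (x - 1) ^ ((r Finset.univ - r F) - (r (S ∪ F) - r F)) *
          ((0 : ℚ) - 1) ^ (S.card - (r (S ∪ F) - r F)) = 0 := by
  classical
  have heC : e ∈ Fᶜ := Finset.mem_compl.mpr he
  have hFc : Fᶜ = insert e (Fᶜ.erase e) := (Finset.insert_erase heC).symm
  rw [hFc, Finset.sum_powerset_insert (Finset.notMem_erase e Fᶜ)]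
  have key : ∀ S ∈ (Fᶜ.erase e).powerset,
      (x - 1) ^ ((r Finset.univ - r F) - (r (insert e S ∪ F) - r F)) *
        ((0 : ℚ) - 1) ^ ((insert e S).card - (r (insert e S ∪ F) - r F))
      = -((x - 1) ^ ((r Finset.univ - r F) - (r (S ∪ F) - r F)) *
          ((0 : ℚ) - 1) ^ (S.card - (r (S ∪ F) - r F))) := by
    intro S hS
    have heS : e ∉ S := fun h => Finset.notMem_erase e Fᶜ (Finset.mem_powerset.mp hS h)
    have hu : insert e S ∪ F = insert e (S ∪ F) := by
      ext z
      simp only [Finset.mem_union, Finset.mem_insert]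
      tauto
    have habs : r (insert e (S ∪ F)) = r (S ∪ F) :=
      absorb F (S ∪ F) e Finset.subset_union_right hre
    have hcard : (insert e S).card = S.card + 1 := Finset.card_insert_of_notMem heS
    have hk : r (S ∪ F) - r F ≤ S.card := by
      have h1 := addcard S F
      have h2 := mono F (S ∪ F) Finset.subset_union_right
      rw [Finset.union_comm F S] at h1
      omega
    rw [hu, habs, hcard,
      show S.card + 1 - (r (S ∪ F) - r F) = (S.card - (r (S ∪ F) - r F)) + 1 by omega,
      pow_succ]
    ring
  rw [Finset.sum_congr rfl key, Finset.sum_neg_distrib]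
  ring
open Classical in
theorem stmt_12 (n : ℕ) (r : Finset (Fin n) → ℕ)
    (h0 : r ∅ = 0)
    (h1 : ∀ (S : Finset (Fin n)) (e : Fin n),
      r S ≤ r (insert e S) ∧ r (insert e S) ≤ r S + 1)
    (h2 : ∀ S T : Finset (Fin n), r (S ∪ T) + r (S ∩ T) ≤ r S + r T)
    (IsFlat : Finset (Fin n) → Prop)
    (hFlat : ∀ F, IsFlat F ↔ ∀ e ∉ F, r F < r (insert e F))
    (x y : ℚ) :
    ∑ S : Finset (Fin n),
        (x - 1) ^ (r Finset.univ - r S) * (y - 1) ^ (S.card - r S) =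
      ∑ F : Finset (Fin n), if IsFlat F then
          (∑ S ∈ F.powerset,
            ((0 : ℚ) - 1) ^ (r F - r S) * (y - 1) ^ (S.card - r S)) *
          (∑ S ∈ Fᶜ.powerset,
            (x - 1) ^ ((r Finset.univ - r F) - (r (S ∪ F) - r F)) *
            ((0 : ℚ) - 1) ^ (S.card - (r (S ∪ F) - r F)))
        else 0 := by
  classical
  -- basic rank facts
  have key1 : ∀ U S : Finset (Fin n), r S ≤ r (S ∪ U) ∧ r (S ∪ U) ≤ r S + U.card := by
    intro U
    induction U using Finset.induction_on with
    | empty => intro S; simp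
    | @insert a U ha ih =>
        intro S
        have h' := ih S
        have hins := h1 (S ∪ U) a
        have hcard : (insert a U).card = U.card + 1 := Finset.card_insert_of_notMem ha
        have hu : S ∪ insert a U = insert a (S ∪ U) := by
          ext z; simp only [Finset.mem_union, Finset.mem_insert]; tauto
        rw [hu, hcard]
        omega
  have mono : ∀ S T : Finset (Fin n), S ⊆ T → r S ≤ r T := by
    intro S T hST
    have := (key1 T S).1
    rwa [Finset.union_eq_right.mpr hST] at this
  have addcard : ∀ U S : Finset (Fin n), r (S ∪ U) ≤ r S + U.card :=
    fun U S => (key1 U S).2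
  have absorb : ∀ (A S : Finset (Fin n)) (e : Fin n),
      A ⊆ S → r (insert e A) = r A → r (insert e S) = r S := by
    intro A S e hAS he
    by_cases heS : e ∈ S
    · rw [Finset.insert_eq_self.mpr heS]
    · have hsub : A ⊆ S ∩ insert e A := by
        intro z hz
        exact Finset.mem_inter.mpr ⟨hAS hz, Finset.mem_insert_of_mem hz⟩
      have h2' := h2 S (insert e A)
      have hunion : S ∪ insert e A = insert e S := by
        ext z
        simp only [Finset.mem_union, Finset.mem_insert]
        constructor
        · rintro (h | h | h)
          · exact Or.inr h
          · exact Or.inl h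
          · exact Or.inr (hAS h)
        · rintro (h | h)
          · exact Or.inr (Or.inl h)
          · exact Or.inl h
      rw [hunion, he] at h2'
      have hA := mono A (S ∩ insert e A) hsub
      have hS := mono S (insert e S) (Finset.subset_insert e S)
      omega
  symm
  calc
    (∑ F : Finset (Fin n), if IsFlat F then
        (∑ S ∈ F.powerset,
          ((0 : ℚ) - 1) ^ (r F - r S) * (y - 1) ^ (S.card - r S)) *
        (∑ S ∈ Fᶜ.powerset,
          (x - 1) ^ ((r Finset.univ - r F) - (r (S ∪ F) - r F)) *
          ((0 : ℚ) - 1) ^ (S.card - (r (S ∪ F) - r F)))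
      else 0)
      = ∑ F : Finset (Fin n),
          (∑ S ∈ F.powerset,
            ((0 : ℚ) - 1) ^ (r F - r S) * (y - 1) ^ (S.card - r S)) *
          (∑ S ∈ Fᶜ.powerset,
            (x - 1) ^ ((r Finset.univ - r F) - (r (S ∪ F) - r F)) *
            ((0 : ℚ) - 1) ^ (S.card - (r (S ∪ F) - r F))) := by
      apply Finset.sum_congr rfl
      intro F _
      split_ifs with hF
      · rfl
      · have hnot : ¬ (∀ e ∉ F, r F < r (insert e F)) :=
          fun h => hF ((hFlat F).mpr h)
        push_neg at hnot
        obtain ⟨e, he, hle⟩ := hnot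
        have hre : r (insert e F) = r F :=
          le_antisymm hle (mono F (insert e F) (Finset.subset_insert e F))
        rw [inner2_eq_zero r x mono addcard absorb F e he hre, mul_zero]
    _ = ∑ F : Finset (Fin n), ∑ B ∈ F.powerset,
          ∑ D ∈ Finset.univ.filter (fun D => F ⊆ D),
          ((0:ℚ) - 1) ^ (r F - r B) * (y - 1) ^ (B.card - r B) *
          ((x - 1) ^ ((r Finset.univ - r F) - (r D - r F)) *
            ((0:ℚ) - 1) ^ ((D.card - F.card) - (r D - r F))) := by
      apply Finset.sum_congr rfl
      intro F _
      rw [Finset.sum_mul_sum]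
      apply Finset.sum_congr rfl
      intro B _
      apply Finset.sum_nbij' (fun C => C ∪ F) (fun D => D \ F)
      · intro C hC
        simp only [Finset.mem_filter, Finset.mem_univ, true_and]
        exact Finset.subset_union_right
      · intro D hD
        simp only [Finset.mem_filter, Finset.mem_univ, true_and] at hD
        rw [Finset.mem_powerset]
        intro z hz
        exact Finset.mem_compl.mpr (Finset.mem_sdiff.mp hz).2
      · intro C hC
        rw [Finset.mem_powerset] at hC
        apply Finset.union_sdiff_cancel_right
        rw [Finset.disjoint_right]
        intro z hzF hzC
        exact Finset.mem_compl.mp (hC hzC) hzF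
      · intro D hD
        simp only [Finset.mem_filter, Finset.mem_univ, true_and] at hD
        exact Finset.sdiff_union_of_subset hD
      · intro C hC
        rw [Finset.mem_powerset] at hC
        have hdisj : Disjoint C F := by
          rw [Finset.disjoint_left]
          intro z hzC hzF
          exact Finset.mem_compl.mp (hC hzC) hzF
        have hcard : (C ∪ F).card - F.card = C.card := by
          rw [Finset.card_union_of_disjoint hdisj]; omega
        rw [hcard]
    _ = ∑ F : Finset (Fin n), ∑ B : Finset (Fin n), ∑ D : Finset (Fin n),
          (if B ⊆ F ∧ F ⊆ D then
            ((0:ℚ) - 1) ^ (r F - r B) * (y - 1) ^ (B.card - r B) *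
            ((x - 1) ^ ((r Finset.univ - r F) - (r D - r F)) *
              ((0:ℚ) - 1) ^ ((D.card - F.card) - (r D - r F)))
          else 0) := by
      apply Finset.sum_congr rfl
      intro F _
      rw [show F.powerset = Finset.univ.filter (fun B => B ⊆ F) by
        ext B; simp, Finset.sum_filter]
      apply Finset.sum_congr rfl
      intro B _
      by_cases hBF : B ⊆ F
      · rw [if_pos hBF, Finset.sum_filter]
        apply Finset.sum_congr rfl
        intro D _
        split_ifs with hd1 hd2 hd2
        · rfl
        · exact absurd ⟨hBF, hd1⟩ hd2
        · exact absurd hd2.2 hd1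
        · rfl
      · rw [if_neg hBF]
        symm
        apply Finset.sum_eq_zero
        intro D _
        rw [if_neg]
        exact fun h => hBF h.1
    _ = ∑ B : Finset (Fin n), ∑ D : Finset (Fin n), ∑ F : Finset (Fin n),
          (if B ⊆ F ∧ F ⊆ D then
            ((0:ℚ) - 1) ^ (r F - r B) * (y - 1) ^ (B.card - r B) *
            ((x - 1) ^ ((r Finset.univ - r F) - (r D - r F)) *
              ((0:ℚ) - 1) ^ ((D.card - F.card) - (r D - r F)))
          else 0) := by
      rw [Finset.sum_comm]
      apply Finset.sum_congr rfl
      intro B _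
      rw [Finset.sum_comm]
    _ = ∑ B : Finset (Fin n), ∑ D : Finset (Fin n),
          (if D = B then
            ((y - 1) ^ (B.card - r B) * (x - 1) ^ (r Finset.univ - r D) *
              (-1 : ℚ) ^ (r B + r D + D.card)) * (-1 : ℚ) ^ B.card
          else 0) := by
      apply Finset.sum_congr rfl
      intro B _
      apply Finset.sum_congr rfl
      intro D _
      have hrw : ∀ F : Finset (Fin n),
          (if B ⊆ F ∧ F ⊆ D then
            ((0:ℚ) - 1) ^ (r F - r B) * (y - 1) ^ (B.card - r B) *
            ((x - 1) ^ ((r Finset.univ - r F) - (r D - r F)) *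
              ((0:ℚ) - 1) ^ ((D.card - F.card) - (r D - r F)))
          else 0)
          = ((y - 1) ^ (B.card - r B) * (x - 1) ^ (r Finset.univ - r D) *
              (-1 : ℚ) ^ (r B + r D + D.card)) *
            (if B ⊆ F ∧ F ⊆ D then (-1 : ℚ) ^ F.card else 0) := by
        intro F
        split_ifs with h
        · obtain ⟨hBF, hFD⟩ := h
          have hBF' : r B ≤ r F := mono _ _ hBF
          have hFD' : r F ≤ r D := mono _ _ hFD
          have hDE : r D ≤ r Finset.univ := mono _ _ (Finset.subset_univ D)
          have hc : F.card ≤ D.card := Finset.card_le_card hFD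
          have hsubm : r D ≤ r F + (D.card - F.card) := by
            have hh := addcard (D \ F) F
            rw [Finset.union_sdiff_of_subset hFD, Finset.card_sdiff_of_subset hFD] at hh
            exact hh
          have h01 : ((0:ℚ) - 1) = -1 := by norm_num
          have hxexp : (r Finset.univ - r F) - (r D - r F) = r Finset.univ - r D := by
            omega
          have hparity : (-1 : ℚ) ^ (r F - r B) *
              (-1 : ℚ) ^ ((D.card - F.card) - (r D - r F))
              = (-1 : ℚ) ^ (r B + r D + D.card) * (-1 : ℚ) ^ F.card := by
            rw [← pow_add, ← pow_add]
            exact neg_one_pow_congr_q (by omega)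
          rw [h01, hxexp]
          calc (-1:ℚ) ^ (r F - r B) * (y - 1) ^ (B.card - r B) *
              ((x - 1) ^ (r Finset.univ - r D) *
                (-1:ℚ) ^ ((D.card - F.card) - (r D - r F)))
              = ((-1:ℚ) ^ (r F - r B) *
                  (-1:ℚ) ^ ((D.card - F.card) - (r D - r F))) *
                ((y - 1) ^ (B.card - r B) * (x - 1) ^ (r Finset.univ - r D)) := by
                ring
            _ = ((-1 : ℚ) ^ (r B + r D + D.card) * (-1 : ℚ) ^ F.card) *
                ((y - 1) ^ (B.card - r B) * (x - 1) ^ (r Finset.univ - r D)) := by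
                rw [hparity]
            _ = (y - 1) ^ (B.card - r B) * (x - 1) ^ (r Finset.univ - r D) *
                  (-1 : ℚ) ^ (r B + r D + D.card) * (-1 : ℚ) ^ F.card := by
                ring
        · rw [mul_zero]
      rw [Finset.sum_congr rfl (fun F _ => hrw F), ← Finset.mul_sum, sum_interval_q,
        mul_ite, mul_zero]
    _ = ∑ B : Finset (Fin n),
          ((y - 1) ^ (B.card - r B) * (x - 1) ^ (r Finset.univ - r B) *
            (-1 : ℚ) ^ (r B + r B + B.card)) * (-1 : ℚ) ^ B.card := by
      apply Finset.sum_congr rfl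
      intro B _
      rw [Finset.sum_ite_eq' Finset.univ B
        (fun D => ((y - 1) ^ (B.card - r B) * (x - 1) ^ (r Finset.univ - r D) *
          (-1 : ℚ) ^ (r B + r D + D.card)) * (-1 : ℚ) ^ B.card),
        if_pos (Finset.mem_univ B)]
    _ = ∑ S : Finset (Fin n),
          (x - 1) ^ (r Finset.univ - r S) * (y - 1) ^ (S.card - r S) := by
      apply Finset.sum_congr rfl
      intro B _
      have hone : (-1:ℚ) ^ (r B + r B + B.card) * (-1:ℚ) ^ B.card = 1 := by
        rw [← pow_add]
        exact Even.neg_one_pow (Nat.even_iff.mpr (by omega))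
      calc (y - 1) ^ (B.card - r B) * (x - 1) ^ (r Finset.univ - r B) *
            (-1 : ℚ) ^ (r B + r B + B.card) * (-1 : ℚ) ^ B.card
          = ((-1:ℚ) ^ (r B + r B + B.card) * (-1:ℚ) ^ B.card) *
            ((y - 1) ^ (B.card - r B) * (x - 1) ^ (r Finset.univ - r B)) := by ring
        _ = 1 * ((y - 1) ^ (B.card - r B) * (x - 1) ^ (r Finset.univ - r B)) := by
            rw [hone]
        _ = (x - 1) ^ (r Finset.univ - r B) * (y - 1) ^ (B.card - r B) := by ring
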